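/- Let A be a closed subset of a topological space X and p a prime. If A is a ℚ-homological Z_n-set in X and a ℚ_p-homological Z_{n+1}-set in X, then A is an R_p-homological Z_n-set in X. -/

import Mathlib

open CategoryTheory CategoryTheory.Limits AlgebraicTopology

/-- The functor sending a type `S` to the free `G`-coefficient group `S →₀ G`. -/
noncomputable def coeffFunctor (G : Type) [AddCommGroup G] : Type ⥤ AddCommGrpCat where
  obj S := AddCommGrpCat.of (S →₀ G)
  map f := AddCommGrpCat.ofHom (Finsupp.mapDomain.addMonoidHom f)
  map_id S := AddCommGrpCat.ext fun x => Finsupp.mapDomain_id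
  map_comp f g := AddCommGrpCat.ext fun x =>
    Finsupp.mapDomain_comp (f := ConcreteCategory.hom f) (g := ConcreteCategory.hom g)

/-- The singular chain complex of `X` with coefficients in `G`. -/
noncomputable def singularChains (G : Type) [AddCommGroup G] (X : Type) [TopologicalSpace X] :
    ChainComplex AddCommGrpCat ℕ :=
  (alternatingFaceMapComplex AddCommGrpCat).obj
    (TopCat.toSSet.obj (TopCat.of X) ⋙ coeffFunctor G)

/-- The chain map induced by a continuous map. -/
noncomputable def singularChainsMap (G : Type) [AddCommGroup G] {X Y : Type}
    [TopologicalSpace X] [TopologicalSpace Y] (f : C(X, Y)) :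
    singularChains G X ⟶ singularChains G Y :=
  (alternatingFaceMapComplex AddCommGrpCat).map
    (Functor.whiskerRight (TopCat.toSSet.map (TopCat.ofHom f : TopCat.of X ⟶ TopCat.of Y)) (coeffFunctor G))

lemma singularChainsMap_comp (G : Type) [AddCommGroup G] {X Y Z : Type}
    [TopologicalSpace X] [TopologicalSpace Y] [TopologicalSpace Z] (f : C(X, Y)) (g : C(Y, Z)) :
    singularChainsMap G (g.comp f) = singularChainsMap G f ≫ singularChainsMap G g := by
  unfold singularChainsMap
  erw [← Functor.map_comp, ← Functor.whiskerRight_comp, ← Functor.map_comp]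
  rfl

/-- Relative singular homology `H_k(U, U \ A; G)` of the pair of subspaces `(U, U \ A)` of `X`,
defined as the homology of the cokernel of the chain map induced by the inclusion
`U \ A ⊆ U`. -/
noncomputable def relHomology (G : Type) [AddCommGroup G] {X : Type} [TopologicalSpace X]
    (U A : Set X) (k : ℕ) : AddCommGrpCat :=
  (cokernel (singularChainsMap G
    (⟨Set.inclusion (Set.diff_subset : U \ A ⊆ U), continuous_inclusion _⟩ :
      C(↥(U \ A), ↥U)))).homology k

/-- `A` is a `G`-homological `Z_n`-set in `X` : it is closed and `H_k(U, U \ A; G) = 0`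
for all open `U ⊆ X` and all `k ≤ n`. -/
def IsHomologicalZSet (G : Type) [AddCommGroup G] {X : Type} [TopologicalSpace X]
    (n : ℕ) (A : Set X) : Prop :=
  IsClosed A ∧ ∀ U : Set X, IsOpen U → ∀ k : ℕ, k ≤ n → Subsingleton (relHomology G U A k)

/-- The subgroup `R_p ⊆ ℚ` of rationals whose denominator is not divisible by `p`
(i.e. rationals `a/b` with `b` coprime to `p`). -/
def RpGroup (p : ℕ) : AddSubgroup ℚ where
  carrier := {q | ∃ a b : ℤ, IsCoprime b (p : ℤ) ∧ (b : ℚ) * q = (a : ℚ)}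
  zero_mem' := ⟨0, 1, isCoprime_one_left, by simp⟩
  add_mem' := by
    rintro x y ⟨a₁, b₁, h₁, e₁⟩ ⟨a₂, b₂, h₂, e₂⟩
    refine ⟨a₁ * b₂ + a₂ * b₁, b₁ * b₂, h₁.mul_left h₂, ?_⟩
    push_cast
    linear_combination (b₂ : ℚ) * e₁ + (b₁ : ℚ) * e₂
  neg_mem' := by
    rintro x ⟨a, b, h, e⟩
    exact ⟨-a, b, h, by push_cast; linear_combination -e⟩

/-! ### Auxiliary constructions -/

/-- The natural transformation of coefficient functors induced by a group hom. -/
noncomputable def coeffNat {G H : Type} [AddCommGroup G] [AddCommGroup H] (φ : G →+ H) :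
    coeffFunctor G ⟶ coeffFunctor H where
  app S := AddCommGrpCat.ofHom (Finsupp.mapRange.addMonoidHom φ)
  naturality S T f := by
    ext x
    exact (Finsupp.mapDomain_mapRange f x φ φ.map_zero φ.map_add).symm

/-- The chain map induced by a coefficient hom. -/
noncomputable def chainsCoeffMap {G H : Type} [AddCommGroup G] [AddCommGroup H] (φ : G →+ H)
    (X : Type) [TopologicalSpace X] : singularChains G X ⟶ singularChains H X :=
  (alternatingFaceMapComplex AddCommGrpCat).map
    (Functor.whiskerLeft (TopCat.toSSet.obj (TopCat.of X)) (coeffNat φ))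

lemma chainsCoeffMap_natural {G H : Type} [AddCommGroup G] [AddCommGroup H] (φ : G →+ H)
    {X Y : Type} [TopologicalSpace X] [TopologicalSpace Y] (f : C(X, Y)) :
    singularChainsMap G f ≫ chainsCoeffMap φ Y = chainsCoeffMap φ X ≫ singularChainsMap H f := by
  unfold singularChainsMap chainsCoeffMap
  erw [← Functor.map_comp, ← Functor.map_comp]
  congr 1
  ext s x
  have h := ConcreteCategory.congr_hom
    ((coeffNat φ).naturality
      ((TopCat.toSSet.map (show TopCat.of X ⟶ TopCat.of Y from TopCat.ofHom f)).app s)) x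
  simpa using h

lemma chainsCoeffMap_comp {G H K : Type} [AddCommGroup G] [AddCommGroup H] [AddCommGroup K]
    (φ : G →+ H) (ψ : H →+ K) (X : Type) [TopologicalSpace X] :
    chainsCoeffMap φ X ≫ chainsCoeffMap ψ X = chainsCoeffMap (ψ.comp φ) X := by
  unfold chainsCoeffMap
  erw [← Functor.map_comp, ← Functor.whiskerLeft_comp]
  congr 2
  ext S x
  exact (Finsupp.mapRange_comp ψ ψ.map_zero φ φ.map_zero (by simp) x).symm

lemma chainsCoeffMap_zero {G H : Type} [AddCommGroup G] [AddCommGroup H]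
    (X : Type) [TopologicalSpace X] : chainsCoeffMap (0 : G →+ H) X = 0 := by
  apply HomologicalComplex.hom_ext
  intro n
  ext x
  show Finsupp.mapRange.addMonoidHom (0 : G →+ H) x = 0
  ext s
  rfl

/-- Lifting a finsupp with values in a subgroup. -/
lemma exists_mapRange_subtype {S : Type} {M : Type} [AddCommGroup M] (N : AddSubgroup M)
    (z : S →₀ M) (hz : ∀ s, z s ∈ N) :
    ∃ z' : S →₀ ↥N, Finsupp.mapRange.addMonoidHom N.subtype z' = z := by
  refine ⟨⟨z.support, fun s => ⟨z s, hz s⟩, fun s => ?_⟩, ?_⟩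
  · simp [Finsupp.mem_support_iff, Subtype.ext_iff]
  · ext s
    simp [Finsupp.mapRange_apply]

lemma mapRange_subtype_injective {S : Type} {M : Type} [AddCommGroup M] (N : AddSubgroup M) :
    Function.Injective (Finsupp.mapRange.addMonoidHom (ι := S) N.subtype) := by
  have h : Function.Injective (⇑N.subtype) := Subtype.val_injective
  intro a b hab
  exact Finsupp.mapRange_injective _ (map_zero _) h hab

lemma mapRange_mk'_surjective {S : Type} {M : Type} [AddCommGroup M] (N : AddSubgroup M) :
    Function.Surjective (Finsupp.mapRange.addMonoidHom (ι := S) (QuotientAddGroup.mk' N)) :=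
  Finsupp.mapRange_surjective _ (map_zero _) (QuotientAddGroup.mk'_surjective N)

section AlgLemmas

variable {T S : Type} (ι : T → S)
  {M : Type} [AddCommGroup M] (N : AddSubgroup M)

lemma alg_mono (hι : Function.Injective ι) (x : S →₀ ↥N) (y : T →₀ M)
    (h : Finsupp.mapRange.addMonoidHom N.subtype x = Finsupp.mapDomain ι y) :
    ∃ y' : T →₀ ↥N, Finsupp.mapDomain ι y' = x := by
  have hyval : ∀ t, y t ∈ N := by
    intro t
    have h1 := DFunLike.congr_fun h (ι t)
    rw [Finsupp.mapDomain_apply hι] at h1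
    rw [Finsupp.mapRange.addMonoidHom_apply, Finsupp.mapRange_apply] at h1
    rw [← h1]
    exact (x (ι t)).2
  obtain ⟨y', hy'⟩ := exists_mapRange_subtype N y hyval
  refine ⟨y', mapRange_subtype_injective N ?_⟩
  rw [h, ← hy']
  rw [Finsupp.mapRange.addMonoidHom_apply, Finsupp.mapRange.addMonoidHom_apply]
  exact (Finsupp.mapDomain_mapRange ι y' (⇑N.subtype) (map_zero _) (map_add N.subtype)).symm

lemma alg_exact (x : S →₀ M) (y : T →₀ M ⧸ N)
    (h : Finsupp.mapRange.addMonoidHom (QuotientAddGroup.mk' N) x = Finsupp.mapDomain ι y) :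
    ∃ (x' : S →₀ ↥N) (w : T →₀ M),
      x = Finsupp.mapRange.addMonoidHom N.subtype x' + Finsupp.mapDomain ι w := by
  obtain ⟨w, hw⟩ := mapRange_mk'_surjective (S := T) N y
  have hz : Finsupp.mapRange.addMonoidHom (QuotientAddGroup.mk' N) (x - Finsupp.mapDomain ι w)
      = 0 := by
    rw [map_sub, h, ← hw]
    rw [Finsupp.mapRange.addMonoidHom_apply, Finsupp.mapRange.addMonoidHom_apply]
    rw [Finsupp.mapDomain_mapRange ι w (⇑(QuotientAddGroup.mk' N)) (map_zero _)
      (map_add (QuotientAddGroup.mk' N))]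
    exact sub_self _
  have hval : ∀ s, (x - Finsupp.mapDomain ι w) s ∈ N := by
    intro s
    have h2 := DFunLike.congr_fun hz s
    rw [Finsupp.mapRange.addMonoidHom_apply, Finsupp.mapRange_apply] at h2
    rw [Finsupp.coe_zero, Pi.zero_apply] at h2
    exact (QuotientAddGroup.eq_zero_iff _).1 h2
  obtain ⟨x', hx'⟩ := exists_mapRange_subtype N _ hval
  exact ⟨x', w, by rw [hx']; abel⟩

end AlgLemmas

section AbShortExact

variable {T S : Type} (ι : T → S)
  {M : Type} [AddCommGroup M] (N : AddSubgroup M)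

lemma coeffNat_subtype_comp_mk' (S : Type) :
    (coeffNat N.subtype).app S ≫ (coeffNat (QuotientAddGroup.mk' N)).app S = 0 := by
  ext x
  show Finsupp.mapRange.addMonoidHom (QuotientAddGroup.mk' N)
    (Finsupp.mapRange.addMonoidHom N.subtype x) = 0
  ext s
  simp only [Finsupp.mapRange.addMonoidHom_apply, Finsupp.mapRange_apply, Finsupp.coe_zero,
    Pi.zero_apply]
  exact (QuotientAddGroup.eq_zero_iff _).2 ((show S →₀ ↥N from x) s).2

lemma coker_map_comp_zero :
    cokernel.map ((coeffFunctor ↥N).map (TypeCat.ofHom ι)) ((coeffFunctor M).map (TypeCat.ofHom ι))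
        ((coeffNat N.subtype).app T) ((coeffNat N.subtype).app S)
        ((coeffNat N.subtype).naturality (TypeCat.ofHom ι)) ≫
      cokernel.map ((coeffFunctor M).map (TypeCat.ofHom ι)) ((coeffFunctor (M ⧸ N)).map (TypeCat.ofHom ι))
        ((coeffNat (QuotientAddGroup.mk' N)).app T) ((coeffNat (QuotientAddGroup.mk' N)).app S)
        ((coeffNat (QuotientAddGroup.mk' N)).naturality (TypeCat.ofHom ι)) = 0 := by
  rw [← cancel_epi (cokernel.π ((coeffFunctor ↥N).map (TypeCat.ofHom ι))), comp_zero,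
    cokernel.π_desc_assoc, Category.assoc, cokernel.π_desc, ← Category.assoc,
    coeffNat_subtype_comp_mk', zero_comp]

/-- The key degreewise short exactness statement. -/
lemma coker_shortExact (hι : Function.Injective ι) :
    (ShortComplex.mk
      (cokernel.map ((coeffFunctor ↥N).map (TypeCat.ofHom ι)) ((coeffFunctor M).map (TypeCat.ofHom ι))
        ((coeffNat N.subtype).app T) ((coeffNat N.subtype).app S)
        ((coeffNat N.subtype).naturality (TypeCat.ofHom ι)))
      (cokernel.map ((coeffFunctor M).map (TypeCat.ofHom ι)) ((coeffFunctor (M ⧸ N)).map (TypeCat.ofHom ι))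
        ((coeffNat (QuotientAddGroup.mk' N)).app T) ((coeffNat (QuotientAddGroup.mk' N)).app S)
        ((coeffNat (QuotientAddGroup.mk' N)).naturality (TypeCat.ofHom ι)))
      (coker_map_comp_zero ι N)).ShortExact := by
  classical
  set dN : AddCommGrpCat.of (T →₀ ↥N) ⟶ AddCommGrpCat.of (S →₀ ↥N) := (coeffFunctor ↥N).map (TypeCat.ofHom ι) with hdN
  set dM : AddCommGrpCat.of (T →₀ M) ⟶ AddCommGrpCat.of (S →₀ M) := (coeffFunctor M).map (TypeCat.ofHom ι) with hdM
  set dP : AddCommGrpCat.of (T →₀ M ⧸ N) ⟶ AddCommGrpCat.of (S →₀ M ⧸ N) :=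
    (coeffFunctor (M ⧸ N)).map (TypeCat.ofHom ι) with hdP
  have πN_surj : Function.Surjective (cokernel.π dN) :=
    (AddCommGrpCat.epi_iff_surjective _).1 inferInstance
  have πM_surj : Function.Surjective (cokernel.π dM) :=
    (AddCommGrpCat.epi_iff_surjective _).1 inferInstance
  have πP_surj : Function.Surjective (cokernel.π dP) :=
    (AddCommGrpCat.epi_iff_surjective _).1 inferInstance
  have exM : ∀ x : S →₀ M, cokernel.π dM x = 0 → ∃ y : T →₀ M, dM y = x := fun x hx =>
    (ShortComplex.ab_exact_iff
      (ShortComplex.mk dM (cokernel.π dM) (cokernel.condition dM))).1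
      (ShortComplex.exact_of_g_is_cokernel _ (cokernelIsCokernel dM)) x hx
  have exP : ∀ x : S →₀ M ⧸ N, cokernel.π dP x = 0 → ∃ y : T →₀ M ⧸ N, dP y = x := fun x hx =>
    (ShortComplex.ab_exact_iff
      (ShortComplex.mk dP (cokernel.π dP) (cokernel.condition dP))).1
      (ShortComplex.exact_of_g_is_cokernel _ (cokernelIsCokernel dP)) x hx
  have πdN : ∀ y : T →₀ ↥N, cokernel.π dN (dN y) = 0 := by
    intro y
    have h := ConcreteCategory.congr_hom (cokernel.condition dN) y
    rw [comp_apply] at h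
    rw [h]
    rfl
  have πdM : ∀ y : T →₀ M, cokernel.π dM (dM y) = 0 := by
    intro y
    have h := ConcreteCategory.congr_hom (cokernel.condition dM) y
    rw [comp_apply] at h
    rw [h]
    rfl
  have hc₁ : ∀ x : S →₀ ↥N,
      (cokernel.map dN dM ((coeffNat N.subtype).app T) ((coeffNat N.subtype).app S)
        ((coeffNat N.subtype).naturality (TypeCat.ofHom ι))) (cokernel.π dN x) =
      cokernel.π dM ((coeffNat N.subtype).app S x) := by
    intro x
    have h := ConcreteCategory.congr_hom
      (cokernel.π_desc dN (((coeffNat N.subtype).app S) ≫ cokernel.π dM) (by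
        erw [hdN, hdM, ← Category.assoc, (coeffNat N.subtype).naturality (TypeCat.ofHom ι), Category.assoc,
          cokernel.condition, comp_zero])) x
    erw [comp_apply] at h
    exact h
  have hc₂ : ∀ x : S →₀ M,
      (cokernel.map dM dP ((coeffNat (QuotientAddGroup.mk' N)).app T)
        ((coeffNat (QuotientAddGroup.mk' N)).app S)
        ((coeffNat (QuotientAddGroup.mk' N)).naturality (TypeCat.ofHom ι))) (cokernel.π dM x) =
      cokernel.π dP ((coeffNat (QuotientAddGroup.mk' N)).app S x) := by
    intro x
    have h := ConcreteCategory.congr_hom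
      (cokernel.π_desc dM (((coeffNat (QuotientAddGroup.mk' N)).app S) ≫ cokernel.π dP) (by
        erw [hdM, hdP, ← Category.assoc, (coeffNat (QuotientAddGroup.mk' N)).naturality (TypeCat.ofHom ι),
          Category.assoc, cokernel.condition, comp_zero])) x
    erw [comp_apply] at h
    exact h
  refine ShortComplex.ShortExact.mk' ?_ ?_ ?_
  · -- exactness
    rw [ShortComplex.ab_exact_iff]
    intro z hz
    obtain ⟨x, rfl⟩ := πM_surj z
    erw [hc₂] at hz
    obtain ⟨y, hy⟩ := exP ((coeffNat (QuotientAddGroup.mk' N)).app S x) hz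
    obtain ⟨x', w, hxw⟩ := alg_exact ι N x y (by exact hy.symm)
    refine ⟨cokernel.π dN x', ?_⟩
    erw [hc₁]
    have hx : x = (show S →₀ M from (coeffNat N.subtype).app S x') + (show S →₀ M from dM w) := hxw
    rw [hx, map_add, πdM, add_zero]
  · -- mono
    rw [AddCommGrpCat.mono_iff_injective]
    rw [injective_iff_map_eq_zero]
    intro z hz
    obtain ⟨x, rfl⟩ := πN_surj z
    erw [hc₁] at hz
    obtain ⟨y, hy⟩ := exM _ hz
    obtain ⟨y', hy'⟩ := alg_mono ι N hι x y (by exact hy.symm)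
    have : dN y' = x := hy'
    rw [← this]
    exact πdN y'
  · -- epi
    rw [AddCommGrpCat.epi_iff_surjective]
    intro z
    obtain ⟨w, rfl⟩ := πP_surj z
    obtain ⟨w', hw'⟩ := mapRange_mk'_surjective (S := S) N w
    exact ⟨cokernel.π dM w', by erw [hc₂]; exact congrArg _ hw'⟩

end AbShortExact

/-! ### Chain level constructions -/

lemma subtype_comp_mk'_eq_zero {M : Type} [AddCommGroup M] (N : AddSubgroup M) :
    (QuotientAddGroup.mk' N).comp N.subtype = 0 := by
  ext x
  simpa using (QuotientAddGroup.eq_zero_iff _).2 x.2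

/-- The inclusion `U \ A → U` as a continuous map. -/
noncomputable def inclCM {X : Type} [TopologicalSpace X] (U A : Set X) : C(↥(U \ A), ↥U) :=
  ⟨Set.inclusion (Set.diff_subset : U \ A ⊆ U), continuous_inclusion _⟩

lemma toSSet_app_injective {X Y : TopCat} (f : X ⟶ Y) (hf : Function.Injective f)
    (s : SimplexCategoryᵒᵖ) : Function.Injective ((TopCat.toSSet.map f).app s) := by
  intro σ τ h
  have hσ : ∀ (g : (TopCat.toSSet.obj X).obj s),
      ((TopCat.toSSet.map f).app s g).down = g.down ≫ f := by
    intro g; rfl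
  have h' := congrArg ULift.down h
  rw [hσ σ, hσ τ] at h'
  apply ULift.ext
  apply TopCat.hom_ext
  apply ContinuousMap.ext
  intro x
  apply hf
  exact ConcreteCategory.congr_hom h' x

section RelSC

variable {X : Type} [TopologicalSpace X] {M : Type} [AddCommGroup M] (N : AddSubgroup M)
  (U A : Set X)

lemma chainsCoeffMap_subtype_comp_mk' (Y : Type) [TopologicalSpace Y] :
    chainsCoeffMap N.subtype Y ≫ chainsCoeffMap (QuotientAddGroup.mk' N) Y = 0 := by
  rw [chainsCoeffMap_comp, subtype_comp_mk'_eq_zero, chainsCoeffMap_zero]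

/-- The short complex of relative chain complexes. -/
noncomputable def relSC : ShortComplex (ChainComplex AddCommGrpCat ℕ) :=
  ShortComplex.mk
    (cokernel.map (singularChainsMap ↥N (inclCM U A)) (singularChainsMap M (inclCM U A))
      (chainsCoeffMap N.subtype _) (chainsCoeffMap N.subtype _)
      (chainsCoeffMap_natural N.subtype (inclCM U A)))
    (cokernel.map (singularChainsMap M (inclCM U A)) (singularChainsMap (M ⧸ N) (inclCM U A))
      (chainsCoeffMap (QuotientAddGroup.mk' N) _) (chainsCoeffMap (QuotientAddGroup.mk' N) _)
      (chainsCoeffMap_natural (QuotientAddGroup.mk' N) (inclCM U A)))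
    (by
      rw [← cancel_epi (cokernel.π (singularChainsMap ↥N (inclCM U A))), comp_zero,
        cokernel.π_desc_assoc, Category.assoc, cokernel.π_desc, ← Category.assoc,
        chainsCoeffMap_subtype_comp_mk', zero_comp])

lemma relSC_shortExact (hUA : Function.Injective (Set.inclusion (Set.diff_subset : U \ A ⊆ U))) :
    (relSC N U A).ShortExact := by
  apply HomologicalComplex.shortExact_of_degreewise_shortExact
  intro k
  let ev := HomologicalComplex.eval AddCommGrpCat (ComplexShape.down ℕ) k
  let s : SimplexCategoryᵒᵖ := Opposite.op (SimplexCategory.mk k)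
  let inclT : TopCat.of ↥(U \ A) ⟶ TopCat.of ↥U := TopCat.ofHom (inclCM U A : C(↥(U \ A), ↥U))
  let ι : (TopCat.toSSet.obj (TopCat.of ↥(U \ A))).obj s →
      (TopCat.toSSet.obj (TopCat.of ↥U)).obj s := (TopCat.toSSet.map inclT).app s
  have hι : Function.Injective ι := toSSet_app_injective inclT hUA s
  have hSE := coker_shortExact ι N hι
  have e : (relSC N U A).map ev ≅
      (ShortComplex.mk
        (cokernel.map ((coeffFunctor ↥N).map (TypeCat.ofHom ι)) ((coeffFunctor M).map (TypeCat.ofHom ι))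
          ((coeffNat N.subtype).app _) ((coeffNat N.subtype).app _)
          ((coeffNat N.subtype).naturality (TypeCat.ofHom ι)))
        (cokernel.map ((coeffFunctor M).map (TypeCat.ofHom ι)) ((coeffFunctor (M ⧸ N)).map (TypeCat.ofHom ι))
          ((coeffNat (QuotientAddGroup.mk' N)).app _) ((coeffNat (QuotientAddGroup.mk' N)).app _)
          ((coeffNat (QuotientAddGroup.mk' N)).naturality (TypeCat.ofHom ι)))
        (coker_map_comp_zero ι N)) := by
    refine ShortComplex.isoMk
      (PreservesCokernel.iso ev (singularChainsMap ↥N (inclCM U A)))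
      (PreservesCokernel.iso ev (singularChainsMap M (inclCM U A)))
      (PreservesCokernel.iso ev (singularChainsMap (M ⧸ N) (inclCM U A))) ?_ ?_
    · exact preserves_cokernel_iso_comp_cokernel_map ev _ _ _ _
        (chainsCoeffMap_natural N.subtype (inclCM U A))
    · exact preserves_cokernel_iso_comp_cokernel_map ev _ _ _ _
        (chainsCoeffMap_natural (QuotientAddGroup.mk' N) (inclCM U A))
  exact ShortComplex.shortExact_of_iso e.symm hSE

end RelSC

lemma AddCommGrp.subsingleton_of_isZero {G : AddCommGrpCat} (h : IsZero G) : Subsingleton G := by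
  refine ⟨fun a b => ?_⟩
  have h1 : (𝟙 G : G ⟶ G) = 0 := h.eq_of_src _ _
  calc a = (𝟙 G : G ⟶ G) a := rfl
    _ = (0 : G ⟶ G) a := by rw [h1]
    _ = (0 : G ⟶ G) b := rfl
    _ = (𝟙 G : G ⟶ G) b := by rw [h1]
    _ = b := rfl

/-- If `A` is a `ℚ`-homological `Z_n`-set and a `ℚ_p`-homological `Z_{n+1}`-set, then `A` is an
`R_p`-homological `Z_n`-set. -/
theorem stmt15 {X : Type} [TopologicalSpace X] (A : Set X) (p : ℕ) (hp : p.Prime) (n : ℕ)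
    (hQ : IsHomologicalZSet ℚ n A)
    (hQp : IsHomologicalZSet (ℚ ⧸ RpGroup p) (n + 1) A) :
    IsHomologicalZSet (↥(RpGroup p)) n A := by
  refine ⟨hQ.1, ?_⟩
  intro U hU k hk
  have hSE : (relSC (RpGroup p) U A).ShortExact :=
    relSC_shortExact (RpGroup p) U A (Set.inclusion_injective _)
  have h3 : IsZero (((relSC (RpGroup p) U A).X₃).homology (k + 1)) := by
    haveI : Subsingleton (((relSC (RpGroup p) U A).X₃).homology (k + 1)) :=
      hQp.2 U hU (k + 1) (by omega)
    exact AddCommGrpCat.isZero_of_subsingleton _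
  have h2 : IsZero (((relSC (RpGroup p) U A).X₂).homology k) := by
    haveI : Subsingleton (((relSC (RpGroup p) U A).X₂).homology k) := hQ.2 U hU k hk
    exact AddCommGrpCat.isZero_of_subsingleton _
  have hrel : (ComplexShape.down ℕ).Rel (k + 1) k := rfl
  have hex := hSE.homology_exact₁ (k + 1) k hrel
  have hf0 : hSE.δ (k + 1) k hrel = 0 := h3.eq_of_src _ _
  have hg0 : HomologicalComplex.homologyMap (relSC (RpGroup p) U A).f k = 0 := h2.eq_of_tgt _ _
  have hz := hex.isZero_X₂ hf0 hg0
  exact AddCommGrp.subsingleton_of_isZero hz
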